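/- Let (Tᵢ)_{i∈I} be a family of ℝ-trees, fix a = (aᵢ) ∈ ∏_{i∈I} Tᵢ, and let S₀ = { y ∈ ∏ Tᵢ : yᵢ ≠ aᵢ for at most countably many i and Σ_{i∈I} distᵢ(aᵢ, yᵢ) < ∞ }, endowed with the ℓ¹ metric dist(y,z) = Σ_{i∈I} distᵢ(yᵢ, zᵢ). Let Y ⊆ S₀ be a strongly convex subset (i.e., for every two points of Y, every geodesic of S₀ connecting them is contained in Y) containing at least two points, and suppose Y has a global cut-point x ∈ Y, i.e. Y ∖ {x} is not connected. Then there exists an index j ∈ I such that any two points of Y agree in every coordinate i ≠ j; that is, Y is contained in the factor { y ∈ S₀ : yᵢ = xᵢ for all i ≠ j }. -/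

import Mathlib

/-- The ℓ¹ distance on a product of metric spaces: the (extended) sum of the coordinate
distances, converted to a real number (it is finite on the ℓ¹-product around a basepoint). -/
noncomputable def l1dist {I : Type*} {X : I → Type*} [∀ i, MetricSpace (X i)]
    (y z : ∀ i, X i) : ℝ :=
  (∑' i, edist (y i) (z i)).toReal

/-- Membership in the ℓ¹-product `S₀` of the family `X` with basepoint `x`: the point `y`
differs from `x` in at most countably many coordinates and the sum of the coordinate
distances from `x` to `y` is finite. -/
def InL1 {I : Type*} {X : I → Type*} [∀ i, MetricSpace (X i)]
    (x y : ∀ i, X i) : Prop :=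
  {i | y i ≠ x i}.Countable ∧ (∑' i, edist (x i) (y i)) < ⊤

/-- A geodesic from `x` to `y`, parametrized by arc length on the interval `[0, dist x y]`. -/
def IsGeodesicFrom {X : Type*} [MetricSpace X] (γ : ℝ → X) (x y : X) : Prop :=
  γ 0 = x ∧ γ (dist x y) = y ∧
    ∀ s ∈ Set.Icc (0 : ℝ) (dist x y), ∀ t ∈ Set.Icc (0 : ℝ) (dist x y),
      dist (γ s) (γ t) = |s - t|

/-- An ℝ-tree: a geodesic metric space in which any two points are joined by a unique
topological arc (any two injective continuous paths with the same endpoints have the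
same image). -/
def IsRTree (T : Type*) [MetricSpace T] : Prop :=
  (∀ x y : T, ∃ γ : ℝ → T, IsGeodesicFrom γ x y) ∧
  ∀ f g : ℝ → T, ContinuousOn f (Set.Icc 0 1) → Set.InjOn f (Set.Icc 0 1) →
    ContinuousOn g (Set.Icc 0 1) → Set.InjOn g (Set.Icc 0 1) →
    f 0 = g 0 → f 1 = g 1 →
    f '' Set.Icc (0 : ℝ) 1 = g '' Set.Icc (0 : ℝ) 1

lemma exists_geodesic {I : Type*} {T : I → Type*} [∀ i, MetricSpace (T i)]
    (htree : ∀ i : I, IsRTree (T i)) (a p q : ∀ i, T i)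
    (hp : InL1 a p) (hq : InL1 a q) (j : I) :
    ∃ γ : ℝ → ∀ i, T i,
      γ 0 = p ∧ γ (l1dist p q) = q ∧
      (∀ s ∈ Set.Icc (0:ℝ) (l1dist p q), ∀ t ∈ Set.Icc (0:ℝ) (l1dist p q),
        l1dist (γ s) (γ t) = |s - t|) ∧
      (∀ t ∈ Set.Icc (0:ℝ) (l1dist p q), InL1 a (γ t)) ∧
      (∀ t ∈ Set.Icc (0:ℝ) (l1dist p q), γ t j ≠ q j → ∀ i, i ≠ j → γ t i = p i) := by
  classical
  -- finiteness of the coordinate distance sum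
  have hee : ∀ i, edist (p i) (q i) ≠ ⊤ := fun i => edist_ne_top _ _
  have he : (∑' i, edist (p i) (q i)) ≠ ⊤ := by
    refine ne_of_lt (lt_of_le_of_lt
      (ENNReal.tsum_le_tsum fun i =>
        (edist_triangle (p i) (a i) (q i)).trans (le_of_eq (by rw [edist_comm (p i) (a i)]))) ?_)
    rw [ENNReal.tsum_add]
    exact ENNReal.add_lt_top.2 ⟨hp.2, hq.2⟩
  set d : I → ℝ := fun i => dist (p i) (q i) with hd_def
  have hd0 : ∀ i, 0 ≤ d i := fun i => dist_nonneg
  have hsd : Summable d := by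
    have := ENNReal.summable_toReal he
    simpa [hd_def, dist_edist] using this
  set D : ℝ := l1dist p q with hD_def
  have hD : D = ∑' i, d i := by
    simp only [hD_def, l1dist]
    rw [ENNReal.tsum_toReal_eq hee]
    simp [hd_def, dist_edist]
  have hdjD : d j ≤ D := hD ▸ hsd.le_tsum j fun i _ => hd0 i
  have hdiD : ∀ i, i ≠ j → d i ≤ D - d j := by
    intro i hij
    have h2 : d j + d i ≤ ∑' i, d i := by
      have := hsd.sum_le_tsum ({j, i} : Finset I) (fun k _ => hd0 k)
      rwa [Finset.sum_pair (Ne.symm hij)] at this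
    rw [hD]; linarith
  have hDdj : 0 ≤ D - d j := by linarith
  -- geodesics in each coordinate
  choose σ hσ using fun i => (htree i).1 (p i) (q i)
  have hσ0 : ∀ i, σ i 0 = p i := fun i => (hσ i).1
  have hσd : ∀ i, σ i (d i) = q i := fun i => (hσ i).2.1
  have hσiso : ∀ i, ∀ s ∈ Set.Icc (0:ℝ) (d i), ∀ t ∈ Set.Icc (0:ℝ) (d i),
      dist (σ i s) (σ i t) = |s - t| := fun i => (hσ i).2.2
  -- schedule
  set g : ℝ → ℝ := fun t => max 0 (t - d j) with hg_def
  set f : I → ℝ → ℝ := fun i t => if i = j then min t (d j) else d i / (D - d j) * g t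
    with hf_def
  have hf0 : ∀ i, f i 0 = 0 := by
    intro i
    by_cases hij : i = j <;>
      simp [hf_def, hg_def, hij, min_eq_left, hd0 j, max_eq_left, sub_nonpos, hd0 j]
  have hfD : ∀ i, f i D = d i := by
    intro i
    by_cases hij : i = j
    · simp [hf_def, hij, min_eq_right hdjD]
    · simp only [hf_def, hg_def, if_neg hij]
      rcases eq_or_lt_of_le hDdj with h0 | h0
      · have : d i = 0 := le_antisymm (by linarith [hdiD i hij, h0.symm]) (hd0 i)
        rw [this, ← h0]
        simp
      · rw [max_eq_right (by linarith), div_mul_cancel₀ _ (ne_of_gt h0)]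
  have hfmono : ∀ i, ∀ s t : ℝ, s ≤ t → f i s ≤ f i t := by
    intro i s t hst
    by_cases hij : i = j
    · simp only [hf_def, if_pos hij]
      exact min_le_min hst le_rfl
    · simp only [hf_def, hg_def, if_neg hij]
      refine mul_le_mul_of_nonneg_left (max_le_max le_rfl (by linarith)) ?_
      exact div_nonneg (hd0 i) hDdj
  have hfmem : ∀ i, ∀ t ∈ Set.Icc (0:ℝ) D, f i t ∈ Set.Icc (0:ℝ) (d i) := by
    intro i t ht
    by_cases hij : i = j
    · subst hij
      have hfi : f i t = min t (d i) := by simp [hf_def]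
      rw [hfi]
      exact ⟨le_min ht.1 (hd0 i), min_le_right _ _⟩
    · simp only [hf_def, hg_def, if_neg hij]
      constructor
      · exact mul_nonneg (div_nonneg (hd0 i) hDdj) (le_max_left _ _)
      · rcases eq_or_lt_of_le hDdj with h0 | h0
        · rw [← h0]; simpa using hd0 i
        · have hg_le : max 0 (t - d j) ≤ D - d j := max_le hDdj (by linarith [ht.2])
          calc d i / (D - d j) * max 0 (t - d j) ≤ d i / (D - d j) * (D - d j) :=
                mul_le_mul_of_nonneg_left hg_le (div_nonneg (hd0 i) hDdj)
            _ = d i := div_mul_cancel₀ _ (ne_of_gt h0)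
  have hsf : ∀ t ∈ Set.Icc (0:ℝ) D, Summable (fun i => f i t) := by
    intro t ht
    exact hsd.of_nonneg_of_le (fun i => (hfmem i t ht).1) (fun i => (hfmem i t ht).2)
  have hfsum : ∀ t ∈ Set.Icc (0:ℝ) D, ∑' i, f i t = t := by
    intro t ht
    rw [(hsf t ht).tsum_eq_add_tsum_ite j]
    have hterm : ∀ i : I, (if i = j then (0:ℝ) else f i t)
        = (if i = j then (0:ℝ) else d i) * (g t / (D - d j)) := by
      intro i
      by_cases hij : i = j
      · simp [hij]
      · simp only [hf_def, hg_def, if_neg hij]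
        ring
    rw [tsum_congr hterm, tsum_mul_right]
    have hrest : ∑' i, (if i = j then (0:ℝ) else d i) = D - d j := by
      have := hsd.tsum_eq_add_tsum_ite j
      rw [← hD] at this
      linarith
    rw [hrest]
    simp only [hf_def, if_pos rfl]
    rcases eq_or_lt_of_le hDdj with h0 | h0
    · rw [← h0, zero_mul, add_zero, min_eq_left (by linarith [ht.2])]
    · rw [mul_comm, div_mul_cancel₀ _ (ne_of_gt h0)]
      simp only [hg_def]
      rcases le_total t (d j) with h | h
      · rw [min_eq_left h, max_eq_left (by linarith : t - d j ≤ 0)]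
        ring
      · rw [min_eq_right h, max_eq_right (by linarith : (0:ℝ) ≤ t - d j)]
        ring
  -- the geodesic
  refine ⟨fun t i => σ i (f i t), ?_, ?_, ?_, ?_, ?_⟩
  · funext i; show σ i (f i 0) = p i; rw [hf0 i, hσ0 i]
  · funext i; show σ i (f i D) = q i; rw [hfD i, hσd i]
  · have key : ∀ s ∈ Set.Icc (0:ℝ) D, ∀ t ∈ Set.Icc (0:ℝ) D, s ≤ t →
        l1dist (fun i => σ i (f i s)) (fun i => σ i (f i t)) = t - s := by
      intro s hs t ht hst
      have hcoord : ∀ i, edist (σ i (f i s)) (σ i (f i t))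
          = ENNReal.ofReal (f i t - f i s) := by
        intro i
        rw [edist_dist, hσiso i _ (hfmem i s hs) _ (hfmem i t ht),
          abs_of_nonpos (by linarith [hfmono i s t hst]), neg_sub]
      have hnn : ∀ i, 0 ≤ f i t - f i s := fun i => by linarith [hfmono i s t hst]
      have hsub : Summable (fun i => f i t - f i s) := (hsf t ht).sub (hsf s hs)
      simp only [l1dist, hcoord]
      rw [← ENNReal.ofReal_tsum_of_nonneg hnn hsub,
        (hsf t ht).tsum_sub (hsf s hs), hfsum t ht, hfsum s hs,
        ENNReal.toReal_ofReal (by linarith)]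
    intro s hs t ht
    show l1dist (fun i => σ i (f i s)) (fun i => σ i (f i t)) = |s - t|
    rcases le_total s t with h | h
    · rw [key s hs t ht h, abs_of_nonpos (by linarith), neg_sub]
    · have hsymm : l1dist (fun i => σ i (f i s)) (fun i => σ i (f i t))
          = l1dist (fun i => σ i (f i t)) (fun i => σ i (f i s)) := by
        simp [l1dist, edist_comm]
      rw [hsymm, key t ht s hs h, abs_of_nonneg (by linarith)]
  · intro t ht
    show InL1 a (fun i => σ i (f i t))
    constructor
    · have hsub : {i | σ i (f i t) ≠ a i} ⊆ {i | p i ≠ a i} ∪ {i | edist (p i) (q i) ≠ 0} := by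
        intro i hi
        by_contra hcon
        simp only [Set.mem_union, Set.mem_setOf_eq, not_or, not_not] at hcon
        obtain ⟨h1, h2⟩ := hcon
        have hd_i : d i = 0 := by
          simp only [hd_def, dist_edist, h2, ENNReal.toReal_zero]
        have : f i t = 0 := le_antisymm (hd_i ▸ (hfmem i t ht).2) (hfmem i t ht).1
        exact hi (by rw [this, hσ0 i, h1])
      refine Set.Countable.mono hsub (Set.Countable.union ?_ ?_)
      · simpa [ne_comm] using hp.1
      · simpa [Function.support] using Summable.countable_support_ennreal he
    · have hbd : ∀ i, edist (a i) (σ i (f i t)) ≤ edist (a i) (p i) + edist (p i) (q i) := by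
        intro i
        refine (edist_triangle (a i) (p i) (σ i (f i t))).trans (add_le_add le_rfl ?_)
        have : edist (p i) (σ i (f i t)) = ENNReal.ofReal (f i t) := by
          rw [← hσ0 i, edist_dist,
            hσiso i 0 ⟨le_rfl, hd0 i⟩ _ (hfmem i t ht), zero_sub, abs_neg,
            abs_of_nonneg (hfmem i t ht).1]
        rw [this, edist_dist]
        exact ENNReal.ofReal_le_ofReal (hfmem i t ht).2
      refine lt_of_le_of_lt (ENNReal.tsum_le_tsum hbd) ?_
      rw [ENNReal.tsum_add]
      exact ENNReal.add_lt_top.2 ⟨hp.2, he.lt_top⟩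
  · intro t ht hne i hij
    show σ i (f i t) = p i
    have htj : t < d j := by
      by_contra hle
      push_neg at hle
      apply hne
      show σ j (f j t) = q j
      have : f j t = d j := by simp [hf_def, min_eq_right hle]
      rw [this, hσd j]
    have hmax : max 0 (t - d j) = 0 := max_eq_left (by linarith)
    have : f i t = 0 := by
      simp [hf_def, hg_def, if_neg hij, hmax]
    rw [this, hσ0 i]

/-- Let `S₀` be the ℓ¹-product of a family of ℝ-trees `T i` with basepoint
`a`, let `Y ⊆ S₀` be a strongly convex subset with at least two points, and let `x ∈ Y` be a
global cut-point of `Y` (so `Y \ {x}` is disconnected, witnessed by a partition into two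
nonempty relatively open subsets `A, B`). Then there is an index `j` such that every point
of `Y` agrees with `x` in every coordinate `i ≠ j`; that is, `Y` is contained in the factor
`{ y ∈ S₀ : y i = x i for all i ≠ j }`. -/
theorem statement5 {I : Type*} {T : I → Type*} [∀ i, MetricSpace (T i)]
    (htree : ∀ i : I, IsRTree (T i))
    (a : ∀ i, T i)
    (Y : Set (∀ i, T i)) (hYS : ∀ y ∈ Y, InL1 a y)
    (hY2 : ∃ y ∈ Y, ∃ z ∈ Y, y ≠ z)
    (hconv : ∀ p ∈ Y, ∀ q ∈ Y, ∀ γ : ℝ → ∀ i, T i,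
      γ 0 = p → γ (l1dist p q) = q →
      (∀ s ∈ Set.Icc (0 : ℝ) (l1dist p q), ∀ t ∈ Set.Icc (0 : ℝ) (l1dist p q),
        l1dist (γ s) (γ t) = |s - t|) →
      (∀ t ∈ Set.Icc (0 : ℝ) (l1dist p q), InL1 a (γ t)) →
      ∀ t ∈ Set.Icc (0 : ℝ) (l1dist p q), γ t ∈ Y)
    (x : ∀ i, T i) (hxY : x ∈ Y)
    (A B : Set (∀ i, T i))
    (hA : A.Nonempty) (hB : B.Nonempty)
    (hAB : A ∪ B = Y \ {x}) (hABdisj : A ∩ B = ∅)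
    (hAopen : ∀ p ∈ A, ∃ ε > 0, ∀ q ∈ Y \ {x}, l1dist p q < ε → q ∈ A)
    (hBopen : ∀ p ∈ B, ∃ ε > 0, ∀ q ∈ Y \ {x}, l1dist p q < ε → q ∈ B) :
    ∃ j : I, ∀ y ∈ Y, ∀ i : I, i ≠ j → y i = x i := by
  classical
  obtain ⟨p, hpA⟩ := hA
  obtain ⟨q, hqB⟩ := hB
  have hsubY : ∀ y, y ∈ A ∪ B → y ∈ Y ∧ y ≠ x := by
    intro y hy
    rw [hAB] at hy
    exact ⟨hy.1, hy.2⟩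
  -- Key lemma: if p' ∈ A, q' ∈ B, and p' differs from x at i, then q' agrees with x
  -- at every j ≠ i.
  have key : ∀ p' ∈ A, ∀ q' ∈ B, ∀ i j : I, i ≠ j → p' i ≠ x i → q' j = x j := by
    intro p' hp' q' hq' i j hij hpx
    by_contra hqx
    have hp'Y := hsubY p' (Or.inl hp')
    have hq'Y := hsubY q' (Or.inr hq')
    obtain ⟨γ, hγ0, hγD, hiso, hIn, havoid⟩ :=
      exists_geodesic htree a p' q' (hYS _ hp'Y.1) (hYS _ hq'Y.1) j
    have hγY : ∀ t ∈ Set.Icc (0:ℝ) (l1dist p' q'), γ t ∈ Y :=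
      hconv p' hp'Y.1 q' hq'Y.1 γ hγ0 hγD hiso hIn
    have hγx : ∀ t ∈ Set.Icc (0:ℝ) (l1dist p' q'), γ t ≠ x := by
      intro t ht hEq
      have h1 : γ t j ≠ q' j := by
        rw [hEq]
        exact fun h => hqx h.symm
      have h2 := havoid t ht h1 i hij
      rw [hEq] at h2
      exact hpx h2.symm
    have hγYx : ∀ t ∈ Set.Icc (0:ℝ) (l1dist p' q'), γ t ∈ Y \ {x} := by
      intro t ht
      exact ⟨hγY t ht, hγx t ht⟩
    set D := l1dist p' q' with hD_def
    have hD0 : (0:ℝ) ≤ D := ENNReal.toReal_nonneg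
    have h0mem : (0:ℝ) ∈ Set.Icc (0:ℝ) D := ⟨le_rfl, hD0⟩
    have hDmem : D ∈ Set.Icc (0:ℝ) D := ⟨hD0, le_rfl⟩
    -- relative openness
    have hAball : ∀ s ∈ Set.Icc (0:ℝ) D, γ s ∈ A →
        ∃ ε > 0, ∀ t ∈ Set.Icc (0:ℝ) D, |s - t| < ε → γ t ∈ A := by
      intro s hs hsa
      obtain ⟨ε, hε, hball⟩ := hAopen (γ s) hsa
      exact ⟨ε, hε, fun t ht hlt =>
        hball (γ t) (hγYx t ht) (by rw [hiso s hs t ht]; exact hlt)⟩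
    have hBball : ∀ s ∈ Set.Icc (0:ℝ) D, γ s ∈ B →
        ∃ ε > 0, ∀ t ∈ Set.Icc (0:ℝ) D, |s - t| < ε → γ t ∈ B := by
      intro s hs hsb
      obtain ⟨ε, hε, hball⟩ := hBopen (γ s) hsb
      exact ⟨ε, hε, fun t ht hlt =>
        hball (γ t) (hγYx t ht) (by rw [hiso s hs t ht]; exact hlt)⟩
    choose! εA hεA hballA using hAball
    choose! εB hεB hballB using hBball
    set u : Set ℝ := ⋃ (s : ℝ) (_ : s ∈ Set.Icc (0:ℝ) D ∧ γ s ∈ A), Metric.ball s (εA s)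
      with hu_def
    set v : Set ℝ := ⋃ (s : ℝ) (_ : s ∈ Set.Icc (0:ℝ) D ∧ γ s ∈ B), Metric.ball s (εB s)
      with hv_def
    have hu_open : IsOpen u := isOpen_iUnion fun s => isOpen_iUnion fun _ => Metric.isOpen_ball
    have hv_open : IsOpen v := isOpen_iUnion fun s => isOpen_iUnion fun _ => Metric.isOpen_ball
    have hmemu : ∀ t ∈ Set.Icc (0:ℝ) D, t ∈ u → γ t ∈ A := by
      intro t ht htu
      simp only [hu_def, Set.mem_iUnion] at htu
      obtain ⟨s, ⟨hs, hsa⟩, hball⟩ := htu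
      refine hballA s hs hsa t ht ?_
      have := Metric.mem_ball.1 hball
      rwa [Real.dist_eq, abs_sub_comm] at this
    have hmemv : ∀ t ∈ Set.Icc (0:ℝ) D, t ∈ v → γ t ∈ B := by
      intro t ht htv
      simp only [hv_def, Set.mem_iUnion] at htv
      obtain ⟨s, ⟨hs, hsb⟩, hball⟩ := htv
      refine hballB s hs hsb t ht ?_
      have := Metric.mem_ball.1 hball
      rwa [Real.dist_eq, abs_sub_comm] at this
    have hcover : Set.Icc (0:ℝ) D ⊆ u ∪ v := by
      intro t ht
      have : γ t ∈ A ∪ B := by rw [hAB]; exact hγYx t ht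
      cases this with
      | inl h =>
        left
        simp only [hu_def, Set.mem_iUnion]
        exact ⟨t, ⟨ht, h⟩, Metric.mem_ball_self (hεA t ht h)⟩
      | inr h =>
        right
        simp only [hv_def, Set.mem_iUnion]
        exact ⟨t, ⟨ht, h⟩, Metric.mem_ball_self (hεB t ht h)⟩
    have hune : (Set.Icc (0:ℝ) D ∩ u).Nonempty := by
      refine ⟨0, h0mem, ?_⟩
      simp only [hu_def, Set.mem_iUnion]
      have h0A : γ 0 ∈ A := by rw [hγ0]; exact hp'
      exact ⟨0, ⟨h0mem, h0A⟩, Metric.mem_ball_self (hεA 0 h0mem h0A)⟩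
    have hvne : (Set.Icc (0:ℝ) D ∩ v).Nonempty := by
      refine ⟨D, hDmem, ?_⟩
      simp only [hv_def, Set.mem_iUnion]
      have hDB : γ D ∈ B := by rw [hγD]; exact hq'
      exact ⟨D, ⟨hDmem, hDB⟩, Metric.mem_ball_self (hεB D hDmem hDB)⟩
    obtain ⟨t, ht, htu, htv⟩ := isPreconnected_Icc u v hu_open hv_open hcover hune hvne
    have : γ t ∈ A ∩ B := ⟨hmemu t ht htu, hmemv t ht htv⟩
    rw [hABdisj] at this
    exact this
  -- Combinatorial conclusion
  obtain ⟨k, hk⟩ := Function.ne_iff.mp (hsubY p (Or.inl hpA)).2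
  have hqk : q k ≠ x k := by
    obtain ⟨m, hm⟩ := Function.ne_iff.mp (hsubY q (Or.inr hqB)).2
    by_cases hkm : m = k
    · rwa [hkm] at hm
    · exact absurd (key p hpA q hqB k m (fun h => hkm h.symm) hk) hm
  refine ⟨k, ?_⟩
  intro y hy i hik
  by_cases hyx : y = x
  · rw [hyx]
  · have hyAB : y ∈ A ∪ B := by rw [hAB]; exact ⟨hy, hyx⟩
    cases hyAB with
    | inl hyA =>
      by_contra h
      exact hqk (key y hyA q hqB i k hik h)
    | inr hyB =>
      by_contra h
      exact h (key p hpA y hyB k i (fun h' => hik h'.symm) hk)
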